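/- Let R be a commutative ring and M an R-module. The kernel of the diagonal homomorphism δ_M : M → ∏_{m ∈ w-Max(R)} M_m, x ↦ ((x/1)_m), equals the GV-torsion submodule tor_GV(M) of M. -/

import Mathlib

universe u v

section WDefs

variable (R : Type u) [CommRing R]

/-- The canonical `R`-linear map `R → Hom_R(J, R)`, `r ↦ (j ↦ r * j)`. -/
def gvCanonicalMap (J : Ideal R) : R →ₗ[R] (J →ₗ[R] R) where
  toFun r := r • (J.subtype)
  map_add' x y := add_smul x y _
  map_smul' r x := by simp [mul_smul]

/-- A finitely generated ideal `J` of `R` is a GV-ideal (Glaz–Vasconcelos ideal)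
if the canonical map `R → Hom_R(J, R)` is an isomorphism. -/
def IsGVIdeal (J : Ideal R) : Prop :=
  J.FG ∧ Function.Bijective (gvCanonicalMap R J)

/-- An ideal `I` of `R` is a w-ideal if whenever `J x ⊆ I` for some GV-ideal `J`,
then `x ∈ I`. -/
def IsWIdeal (I : Ideal R) : Prop :=
  ∀ x : R, (∃ J : Ideal R, IsGVIdeal R J ∧ ∀ j ∈ J, j * x ∈ I) → x ∈ I

/-- `m` is a maximal w-ideal: maximal among the proper w-ideals of `R`. -/
def IsMaxWIdeal (m : Ideal R) : Prop :=
  IsWIdeal R m ∧ m ≠ ⊤ ∧ ∀ I : Ideal R, IsWIdeal R I → I ≠ ⊤ → m ≤ I → I = m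

variable {M : Type v} [AddCommGroup M] [Module R M]

/-- `x` is a GV-torsion element if it is killed by some GV-ideal. -/
def IsGVTorsionElem (x : M) : Prop :=
  ∃ J : Ideal R, IsGVIdeal R J ∧ ∀ j ∈ J, j • x = 0

variable (M)

/-- `M` is GV-torsion-free if it has no nonzero GV-torsion element. -/
def IsGVTorsionFree : Prop := ∀ x : M, IsGVTorsionElem R x → x = 0

/-- `M` is GV-torsion if all its elements are GV-torsion. -/
def IsGVTorsion : Prop := ∀ x : M, IsGVTorsionElem R x

/-- `M` is a w-module: GV-torsion-free and every map from a GV-ideal to `M`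
extends to `R`. -/
def IsWModule : Prop :=
  IsGVTorsionFree R M ∧
    ∀ J : Ideal R, IsGVIdeal R J → ∀ f : J →ₗ[R] M,
      ∃ g : R →ₗ[R] M, ∀ x : J, g (x : R) = f x

end WDefs

section Aux

variable {R : Type u} [CommRing R]

@[simp] lemma gvCanonicalMap_apply (J : Ideal R) (r : R) (j : J) :
    gvCanonicalMap R J r j = r * j := rfl

lemma IsGVIdeal.eq_of {J : Ideal R} (h : IsGVIdeal R J) {r r' : R}
    (hrr : ∀ j ∈ J, r * j = r' * j) : r = r' := by
  apply h.2.1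
  ext j
  simpa using hrr j j.2

lemma IsGVIdeal.exists_of {J : Ideal R} (h : IsGVIdeal R J) (f : J →ₗ[R] R) :
    ∃ r : R, ∀ j : J, f j = r * (j : R) := by
  obtain ⟨r, hr⟩ := h.2.2 f
  exact ⟨r, fun j => by rw [← hr]; rfl⟩

lemma isGVIdeal_top : IsGVIdeal R (⊤ : Ideal R) := by
  refine ⟨⟨{1}, by simp⟩, ?_, ?_⟩
  · intro r r' h
    have := congrArg (fun g => g (⟨1, trivial⟩ : (⊤ : Ideal R))) h
    simpa using this
  · intro f
    refine ⟨f ⟨1, trivial⟩, ?_⟩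
    ext j
    have : (j : (⊤ : Ideal R)) = (j : R) • (⟨1, trivial⟩ : (⊤ : Ideal R)) :=
      Subtype.ext (by simp)
    rw [gvCanonicalMap_apply, this, f.map_smul]
    simp [mul_comm]

lemma IsGVIdeal.mul {J₁ J₂ : Ideal R} (h₁ : IsGVIdeal R J₁) (h₂ : IsGVIdeal R J₂) :
    IsGVIdeal R (J₁ * J₂) := by
  have hmm : ∀ (a : J₁) (b : J₂), (a : R) * (b : R) ∈ J₁ * J₂ :=
    fun a b => Submodule.mul_mem_mul a.2 b.2
  refine ⟨Submodule.FG.mul h₁.1 h₂.1, ?_, ?_⟩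
  · intro r r' h
    apply h₂.eq_of
    intro j₂ hj₂
    apply h₁.eq_of
    intro j₁ hj₁
    have := congrArg (fun g => g (⟨j₁ * j₂, Submodule.mul_mem_mul hj₁ hj₂⟩ : J₁ * J₂)) h
    simp only [gvCanonicalMap_apply] at this
    calc r * j₂ * j₁ = r * (j₁ * j₂) := by ring
    _ = r' * (j₁ * j₂) := this
    _ = r' * j₂ * j₁ := by ring
  · intro f
    have hL : ∀ j₂ : J₂, ∃ r : R, ∀ j₁ : J₁,
        f ⟨(j₁ : R) * (j₂ : R), hmm j₁ j₂⟩ = r * j₁ := by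
      intro j₂
      let L : J₁ →ₗ[R] R :=
        { toFun := fun j₁ => f ⟨(j₁ : R) * (j₂ : R), hmm j₁ j₂⟩
          map_add' := by
            intro a b
            rw [show (⟨((a + b : J₁) : R) * (j₂ : R), hmm (a + b) j₂⟩ : J₁ * J₂)
                = ⟨(a : R) * (j₂ : R), hmm a j₂⟩ + ⟨(b : R) * (j₂ : R), hmm b j₂⟩
              from Subtype.ext (by push_cast; ring), f.map_add]
          map_smul' := by
            intro c a
            rw [show (⟨((c • a : J₁) : R) * (j₂ : R), hmm (c • a) j₂⟩ : J₁ * J₂)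
                = c • ⟨(a : R) * (j₂ : R), hmm a j₂⟩
              from Subtype.ext (by push_cast; simp only [smul_eq_mul]; ring), f.map_smul]
            rfl }
      obtain ⟨r, hr⟩ := h₁.exists_of L
      exact ⟨r, fun j₁ => hr j₁⟩
    choose rr hrr using hL
    let g : J₂ →ₗ[R] R :=
      { toFun := rr
        map_add' := by
          intro a b
          apply h₁.eq_of
          intro j₁ hj₁
          have ha := hrr a ⟨j₁, hj₁⟩
          have hb := hrr b ⟨j₁, hj₁⟩
          have hab := hrr (a + b) ⟨j₁, hj₁⟩
          have key : (⟨(j₁ : R) * ((a + b : J₂) : R), hmm ⟨j₁, hj₁⟩ (a + b)⟩ : J₁ * J₂)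
              = ⟨j₁ * (a : R), hmm ⟨j₁, hj₁⟩ a⟩ + ⟨j₁ * (b : R), hmm ⟨j₁, hj₁⟩ b⟩ :=
            Subtype.ext (by push_cast; ring)
          rw [key, f.map_add, ha, hb] at hab
          rw [add_mul]
          exact hab.symm
        map_smul' := by
          intro c a
          apply h₁.eq_of
          intro j₁ hj₁
          have ha := hrr a ⟨j₁, hj₁⟩
          have hca := hrr (c • a) ⟨j₁, hj₁⟩
          have key : (⟨(j₁ : R) * ((c • a : J₂) : R), hmm ⟨j₁, hj₁⟩ (c • a)⟩ : J₁ * J₂)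
              = c • ⟨j₁ * (a : R), hmm ⟨j₁, hj₁⟩ a⟩ :=
            Subtype.ext (by push_cast; simp only [smul_eq_mul]; ring)
          rw [key, f.map_smul, ha] at hca
          simp only [RingHom.id_apply, smul_eq_mul] at hca ⊢
          rw [mul_assoc]
          exact hca.symm }
    obtain ⟨r₀, hr₀⟩ := h₂.exists_of g
    refine ⟨r₀, ?_⟩
    ext ⟨x, hx⟩
    simp only [gvCanonicalMap_apply]
    symm
    refine Submodule.mul_induction_on' (C := fun x hx => f ⟨x, hx⟩ = r₀ * x) ?_ ?_ hx
    · intro a ha b hb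
      have h1 := hrr ⟨b, hb⟩ ⟨a, ha⟩
      have h2 := hr₀ ⟨b, hb⟩
      rw [show g ⟨b, hb⟩ = rr ⟨b, hb⟩ from rfl] at h2
      rw [h2] at h1
      rw [show f ⟨a * b, Submodule.mul_mem_mul ha hb⟩
          = f ⟨a * b, hmm ⟨a, ha⟩ ⟨b, hb⟩⟩ from rfl, h1]
      ring
    · intro a ha b hb ia ib
      have key : (⟨a + b, add_mem ha hb⟩ : J₁ * J₂) = ⟨a, ha⟩ + ⟨b, hb⟩ := rfl
      rw [key, f.map_add, ia, ib]
      ring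

end Aux

/-- The set of maximal w-ideals (each of which is prime). -/
def WMaxPrimes (R : Type u) [CommRing R] : Type u :=
  {m : Ideal R // IsMaxWIdeal R m ∧ m.IsPrime}

/-- The multiplicative complement of a maximal w-ideal. -/
def wMaxCompl {R : Type u} [CommRing R] (m : WMaxPrimes R) : Submonoid R :=
  @Ideal.primeCompl R _ m.1 m.2.2

/-- The diagonal homomorphism `δ_M : M → ∏_{m ∈ w-Max(R)} M_m`. -/
noncomputable def wDiagonal (R : Type u) [CommRing R] (M : Type u) [AddCommGroup M]
    [Module R M] :
    M →ₗ[R] ((m : WMaxPrimes R) → LocalizedModule (wMaxCompl m) M) :=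
  LinearMap.pi fun m => LocalizedModule.mkLinearMap (wMaxCompl m) M


section Aux2

variable {R : Type u} [CommRing R]

lemma isGVIdeal_prod {ι : Type*} (s : Finset ι) (f : ι → Ideal R)
    (hf : ∀ i ∈ s, IsGVIdeal R (f i)) : IsGVIdeal R (∏ i ∈ s, f i) := by
  refine Finset.prod_induction f (IsGVIdeal R) (fun a b ha hb => ha.mul hb) ?_ hf
  rw [Ideal.one_eq_top]; exact isGVIdeal_top

lemma prod_le_of_mem {ι : Type*} [DecidableEq ι] (s : Finset ι) (f : ι → Ideal R) {i : ι}
    (hi : i ∈ s) : (∏ j ∈ s, f j) ≤ f i := by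
  rw [← Finset.mul_prod_erase s f hi]
  exact Ideal.mul_le_left

/-- The w-closure of an ideal. -/
def wClosure (I : Ideal R) : Ideal R where
  carrier := {x | ∃ J : Ideal R, IsGVIdeal R J ∧ ∀ j ∈ J, j * x ∈ I}
  zero_mem' := ⟨⊤, isGVIdeal_top, fun j _ => by simpa using I.zero_mem⟩
  add_mem' := by
    rintro a b ⟨J₁, h₁, hj₁⟩ ⟨J₂, h₂, hj₂⟩
    refine ⟨J₁ * J₂, h₁.mul h₂, fun j hj => ?_⟩
    have hja : j ∈ J₁ := Ideal.mul_le_left hj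
    have hjb : j ∈ J₂ := Ideal.mul_le_right hj
    rw [mul_add]
    exact add_mem (hj₁ j hja) (hj₂ j hjb)
  smul_mem' := by
    rintro c x ⟨J, h, hj⟩
    refine ⟨J, h, fun j hjJ => ?_⟩
    have := I.mul_mem_left c (hj j hjJ)
    simpa [smul_eq_mul, mul_left_comm, mul_assoc, mul_comm] using this

lemma le_wClosure (I : Ideal R) : I ≤ wClosure I :=
  fun _ hx => ⟨⊤, isGVIdeal_top, fun j _ => I.mul_mem_left j hx⟩

lemma isWIdeal_wClosure (I : Ideal R) : IsWIdeal R (wClosure I) := by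
  classical
  rintro x ⟨J, hJ, hx⟩
  obtain ⟨S, hS⟩ := hJ.1
  have hmem : ∀ s ∈ S, (s : R) ∈ J := fun s hs => by
    rw [← hS]; exact Submodule.subset_span hs
  have hSx : ∀ s : S, ∃ K : Ideal R, IsGVIdeal R K ∧ ∀ k ∈ K, k * ((s : R) * x) ∈ I :=
    fun s => hx s (hmem s s.2)
  choose K hK hK' using hSx
  set P : Ideal R := ∏ s ∈ S.attach, K s with hP
  have hPgv : IsGVIdeal R P := isGVIdeal_prod _ _ (fun i _ => hK i)
  refine ⟨J * P, hJ.mul hPgv, fun j hj => ?_⟩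
  refine Submodule.mul_induction_on (C := fun j => j * x ∈ I) hj ?_ ?_
  · intro a ha p hp
    rw [← hS] at ha
    induction ha using Submodule.span_induction with
    | mem y hy =>
        have hpy : p ∈ K ⟨y, hy⟩ := prod_le_of_mem S.attach K (Finset.mem_attach S ⟨y, hy⟩) hp
        have h2 := hK' ⟨y, hy⟩ p hpy
        have h4 : y * p * x = p * (y * x) := by ring
        rw [h4]; exact h2
    | zero => simpa using I.zero_mem
    | add u v hu hv iu iv =>
        have h3 : (u + v) * p * x = u * p * x + v * p * x := by ring
        rw [h3]; exact add_mem iu iv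
    | smul c u hu iu =>
        have h3 : (c • u) * p * x = c * (u * p * x) := by
          simp only [smul_eq_mul]; ring
        rw [h3]; exact I.mul_mem_left c iu
  · intro a b ia ib
    have h3 : (a + b) * x = a * x + b * x := by ring
    rw [h3]; exact add_mem ia ib

lemma gv_not_le_w {J m : Ideal R} (hJ : IsGVIdeal R J) (hw : IsWIdeal R m) (hne : m ≠ ⊤) :
    ¬ J ≤ m := by
  intro hle
  apply hne
  rw [Ideal.eq_top_iff_one]
  exact hw 1 ⟨J, hJ, fun j hj => by simpa using hle hj⟩

lemma exists_maxWIdeal {I : Ideal R} (hI : IsWIdeal R I) (hne : I ≠ ⊤) :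
    ∃ m : Ideal R, IsMaxWIdeal R m ∧ I ≤ m := by
  classical
  have hzorn : ∀ c ⊆ {J : Ideal R | IsWIdeal R J ∧ J ≠ ⊤}, IsChain (· ≤ ·) c →
      ∀ y ∈ c, ∃ ub ∈ {J : Ideal R | IsWIdeal R J ∧ J ≠ ⊤}, ∀ z ∈ c, z ≤ ub := by
    intro c hcs hchain y hy
    have hdir : DirectedOn (· ≤ ·) c := hchain.directedOn
    refine ⟨sSup c, ⟨?_, ?_⟩, fun z hz => le_sSup hz⟩
    · rintro x ⟨J, hJ, hx⟩
      obtain ⟨S, hS⟩ := hJ.1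
      have claim : ∀ T : Finset R, (∀ s ∈ T, s * x ∈ sSup c) →
          ∃ p ∈ c, ∀ s ∈ T, s * x ∈ p := by
        intro T
        induction T using Finset.induction with
        | empty => exact fun _ => ⟨y, hy, by simp⟩
        | @insert a T hni ih =>
            intro hT
            obtain ⟨p, hpc, hp⟩ := ih (fun s hs => hT s (Finset.mem_insert_of_mem hs))
            obtain ⟨q, hqc, hq⟩ := (Submodule.mem_sSup_of_directed ⟨y, hy⟩ hdir).1
              (hT a (Finset.mem_insert_self a T))
            rcases hchain.total hpc hqc with h | h
            · refine ⟨q, hqc, fun s hs => ?_⟩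
              rcases Finset.mem_insert.1 hs with rfl | hs
              · exact hq
              · exact h (hp s hs)
            · refine ⟨p, hpc, fun s hs => ?_⟩
              rcases Finset.mem_insert.1 hs with rfl | hs
              · exact h hq
              · exact hp s hs
      obtain ⟨p, hpc, hp⟩ := claim S (fun s hs =>
        hx s (by rw [← hS]; exact Submodule.subset_span hs))
      have hxp : x ∈ p := by
        apply (hcs hpc).1
        refine ⟨J, hJ, fun j hj => ?_⟩
        rw [← hS] at hj
        induction hj using Submodule.span_induction with
        | mem s hs => exact hp s hs
        | zero => simpa using p.zero_mem
        | add u v hu hv iu iv => rw [add_mul]; exact add_mem iu iv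
        | smul cc u hu iu =>
            have h3 : (cc • u) * x = cc * (u * x) := by
              simp only [smul_eq_mul]; ring
            rw [h3]; exact p.mul_mem_left cc iu
      exact le_sSup hpc hxp
    · intro h
      have h1 : (1 : R) ∈ sSup c := h ▸ Submodule.mem_top
      obtain ⟨p, hpc, hp⟩ := (Submodule.mem_sSup_of_directed ⟨y, hy⟩ hdir).1 h1
      exact (hcs hpc).2 ((Ideal.eq_top_iff_one p).2 hp)
  obtain ⟨m, hIm, hms, hmax⟩ := zorn_le_nonempty₀ _ hzorn I ⟨hI, hne⟩
  exact ⟨m, ⟨hms.1, hms.2,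
    fun I' hw' hne' hle' => le_antisymm (hmax ⟨hw', hne'⟩ hle') hle'⟩, hIm⟩

lemma IsMaxWIdeal.isPrime {m : Ideal R} (hm : IsMaxWIdeal R m) : m.IsPrime := by
  refine ⟨hm.2.1, ?_⟩
  intro a b hab
  by_contra hcon
  push_neg at hcon
  obtain ⟨ha, hb⟩ := hcon
  have hA : ∀ y : R, y ∉ m → (1 : R) ∈ wClosure (m ⊔ Ideal.span {y}) := by
    intro y hy
    by_contra h1
    have hne : wClosure (m ⊔ Ideal.span {y}) ≠ ⊤ := by
      intro h
      exact h1 (h ▸ Submodule.mem_top)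
    have heq := hm.2.2 _ (isWIdeal_wClosure _) hne
      (le_trans le_sup_left (le_wClosure _))
    apply hy
    rw [← heq]
    exact (le_trans le_sup_right (le_wClosure _) : Ideal.span {y} ≤ wClosure (m ⊔ Ideal.span {y}))
      (Ideal.mem_span_singleton_self y)
  obtain ⟨J₁, hJ₁, h₁⟩ := hA a ha
  obtain ⟨J₂, hJ₂, h₂⟩ := hA b hb
  simp only [mul_one] at h₁ h₂
  have hle : J₁ * J₂ ≤ m := by
    rw [Ideal.mul_le]
    intro r hr s hs
    obtain ⟨u, hu, z, hz, rfl⟩ := Submodule.mem_sup.1 (h₁ r hr)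
    obtain ⟨v, hv, w, hw, rfl⟩ := Submodule.mem_sup.1 (h₂ s hs)
    obtain ⟨cc, rfl⟩ := Ideal.mem_span_singleton'.1 hz
    obtain ⟨d, rfl⟩ := Ideal.mem_span_singleton'.1 hw
    have key : (u + cc * a) * (v + d * b) =
        u * (v + d * b) + (cc * a) * v + (cc * d) * (a * b) := by ring
    rw [key]
    exact add_mem (add_mem (m.mul_mem_right _ hu) (m.mul_mem_left _ hv))
      (m.mul_mem_left _ hab)
  exact gv_not_le_w (hJ₁.mul hJ₂) hm.1 hm.2.1 hle

end Aux2

/-- The kernel of the diagonal map `δ_M : M → ∏_{m ∈ w-Max(R)} M_m`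
is exactly the GV-torsion submodule of `M`. -/
theorem ker_wDiagonal_eq_gvTorsion (R : Type u) [CommRing R] (M : Type u) [AddCommGroup M]
    [Module R M] :
    ∀ x : M, wDiagonal R M x = 0 ↔ IsGVTorsionElem R x := by
  intro x
  constructor
  · intro h0
    by_contra hx
    set I : Ideal R := LinearMap.ker (LinearMap.toSpanSingleton R M x) with hI
    have hne : wClosure I ≠ ⊤ := by
      intro h
      have h1 : (1 : R) ∈ wClosure I := h ▸ Submodule.mem_top
      obtain ⟨J, hJ, hJ1⟩ := h1
      refine hx ⟨J, hJ, fun j hj => ?_⟩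
      have h2 := hJ1 j hj
      rw [mul_one] at h2
      simpa [hI, LinearMap.mem_ker, LinearMap.toSpanSingleton_apply] using h2
    obtain ⟨m, hmax, hIm⟩ := exists_maxWIdeal (isWIdeal_wClosure I) hne
    have hprime : m.IsPrime := hmax.isPrime
    let mm : WMaxPrimes R := ⟨m, hmax, hprime⟩
    have hcomp : LocalizedModule.mk x (1 : wMaxCompl mm) = 0 := by
      have h3 := congrFun h0 mm
      simpa [wDiagonal, LinearMap.pi_apply] using h3
    rw [← LocalizedModule.zero_mk (1 : wMaxCompl mm), LocalizedModule.mk_eq] at hcomp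
    obtain ⟨u, hu⟩ := hcomp
    simp only [one_smul, smul_zero] at hu
    have humem : (u : R) ∈ I := by
      simpa [hI, LinearMap.mem_ker, LinearMap.toSpanSingleton_apply, Submonoid.smul_def] using hu
    have hum : (u : R) ∈ m := hIm (le_wClosure I humem)
    exact u.2 hum
  · rintro ⟨J, hJ, hJx⟩
    funext mm
    have hnle : ¬ J ≤ mm.1 := gv_not_le_w hJ mm.2.1.1 mm.2.1.2.1
    obtain ⟨s, hsJ, hsm⟩ := SetLike.not_le_iff_exists.1 hnle
    have hsc : s ∈ wMaxCompl mm := hsm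
    show LocalizedModule.mkLinearMap (wMaxCompl mm) M x = 0
    rw [LocalizedModule.mkLinearMap_apply,
      ← LocalizedModule.zero_mk (1 : wMaxCompl mm), LocalizedModule.mk_eq]
    refine ⟨⟨s, hsc⟩, ?_⟩
    simp only [one_smul, smul_zero]
    show s • x = 0
    exact hJx s hsJ
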